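/- Let S¹ denote [0,1] with endpoints identified, and let g : S¹ × [0,1] → ℝ² be continuous. Define d±(x,t) = dist(x, g(S¹ × {t})) if x ∈ g(S¹ × {t}) or the winding number of g(·,t) around x is 0, and d±(x,t) = −dist(x, g(S¹ × {t})) otherwise. Then d± : ℝ² × [0,1] → ℝ is continuous. -/

import Mathlib

open Set

/-- The loop `γ` (parametrized on `[0,1]`) has winding number `n` around `x`:
there is a continuous polar lifting `γ s - x = r s · exp(θ s · i)` with
`θ 1 - θ 0 = 2πn`. -/
def WindingNumber (γ : ℝ → ℂ) (x : ℂ) (n : ℤ) : Prop :=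
  ∃ θ r : ℝ → ℝ, ContinuousOn θ (Icc 0 1) ∧ ContinuousOn r (Icc 0 1) ∧
    (∀ s ∈ Icc (0:ℝ) 1, 0 < r s ∧ γ s - x = r s * Complex.exp (θ s * Complex.I)) ∧
    θ 1 - θ 0 = 2 * Real.pi * n

open Metric Filter Complex

/-- Transfer of a polar lifting under a pointwise perturbation smaller than the
distance to the point: the winding number is preserved. -/
lemma wind_transfer (γ γ' : ℝ → ℂ) (x x' : ℂ) (n : ℤ)
    (hc' : ContinuousOn (fun s => γ' s - x') (Icc 0 1))
    (hl : γ 0 = γ 1) (hl' : γ' 0 = γ' 1)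
    (hclose : ∀ s ∈ Icc (0:ℝ) 1, ‖(γ' s - x') - (γ s - x)‖ < ‖γ s - x‖)
    (hW : WindingNumber γ x n) : WindingNumber γ' x' n := by
  obtain ⟨θ, r, hθ, hr, hpt, hdiff⟩ := hW
  -- the base function is continuous on Icc
  have hfc : ContinuousOn (fun s => γ s - x) (Icc 0 1) := by
    refine ContinuousOn.congr (f := fun s => (r s : ℂ) * Complex.exp (θ s * Complex.I)) ?_ ?_
    · exact (Complex.continuous_ofReal.comp_continuousOn hr).mul
        (Complex.continuous_exp.comp_continuousOn
          ((Complex.continuous_ofReal.comp_continuousOn hθ).mul continuousOn_const))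
    · exact fun s hs => (hpt s hs).2
  have hfne : ∀ s ∈ Icc (0:ℝ) 1, γ s - x ≠ 0 := by
    intro s hs h
    have := hclose s hs
    rw [h] at this
    simp only [sub_zero, zero_sub, norm_neg, norm_zero] at this
    exact absurd this (norm_nonneg _).not_gt
  have hfne' : ∀ s ∈ Icc (0:ℝ) 1, γ' s - x' ≠ 0 := by
    intro s hs h
    have := hclose s hs
    rw [h] at this
    simp only [zero_sub, norm_neg] at this
    exact lt_irrefl _ this
  set q : ℝ → ℂ := fun s => (γ' s - x') / (γ s - x) with hq_def
  have hqcont : ContinuousOn q (Icc 0 1) := hc'.div hfc hfne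
  have hqne : ∀ s ∈ Icc (0:ℝ) 1, q s ≠ 0 := fun s hs =>
    div_ne_zero (hfne' s hs) (hfne s hs)
  have hqslit : ∀ s ∈ Icc (0:ℝ) 1, q s ∈ Complex.slitPlane := by
    intro s hs
    rw [Complex.mem_slitPlane_iff]
    left
    have h1 : ‖q s - 1‖ < 1 := by
      have hne := hfne s hs
      have : q s - 1 = ((γ' s - x') - (γ s - x)) / (γ s - x) := by
        simp only [hq_def]; rw [div_sub_one hne]
      rw [this, norm_div]
      rw [div_lt_one (norm_pos_iff.mpr hne)]
      exact hclose s hs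
    have h2 : |(q s - 1).re| ≤ ‖q s - 1‖ := Complex.abs_re_le_norm _
    have h3 : (q s).re = (q s - 1).re + 1 := by simp
    have := abs_le.mp h2
    linarith [this.1]
  refine ⟨fun s => θ s + Complex.arg (q s), fun s => r s * ‖q s‖, ?_, ?_, ?_, ?_⟩
  · exact hθ.add (fun s hs => (Complex.continuousAt_arg (hqslit s hs)).comp_continuousWithinAt
      (hqcont s hs))
  · exact hr.mul hqcont.norm
  · intro s hs
    constructor
    · exact mul_pos (hpt s hs).1 (norm_pos_iff.mpr (hqne s hs))
    · have key : γ' s - x' = q s * (γ s - x) := by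
        simp only [hq_def]
        rw [div_mul_cancel₀ _ (hfne s hs)]
      rw [key, (hpt s hs).2]
      conv_lhs => rw [← Complex.norm_mul_exp_arg_mul_I (q s)]
      rw [Complex.ofReal_add, Complex.ofReal_mul, add_mul, Complex.exp_add]
      ring
  · have hq01 : q 0 = q 1 := by
      simp only [hq_def, hl, hl']
    show θ 1 + (q 1).arg - (θ 0 + (q 0).arg) = 2 * Real.pi * n
    rw [hq01]
    linarith [hdiff]

/-- The signed distance `d±(x,t)` to the moving loop `g(·,t)`, negative exactly
on points with nonzero winding number, is continuous. -/
theorem stmt12 (g : ℝ → ℝ → ℂ)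
    (hg : ContinuousOn (fun q : ℝ × ℝ => g q.1 q.2) (Icc 0 1 ×ˢ Icc 0 1))
    (hloop : ∀ t ∈ Icc (0:ℝ) 1, g 0 t = g 1 t)
    (dpm : ℂ → ℝ → ℝ)
    (h1 : ∀ x : ℂ, ∀ t ∈ Icc (0:ℝ) 1,
      (x ∈ (fun s => g s t) '' Icc 0 1 ∨ WindingNumber (fun s => g s t) x 0) →
      dpm x t = Metric.infDist x ((fun s => g s t) '' Icc 0 1))
    (h2 : ∀ x : ℂ, ∀ t ∈ Icc (0:ℝ) 1,
      x ∉ (fun s => g s t) '' Icc 0 1 → ¬ WindingNumber (fun s => g s t) x 0 →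
      dpm x t = - Metric.infDist x ((fun s => g s t) '' Icc 0 1)) :
    ContinuousOn (fun q : ℂ × ℝ => dpm q.1 q.2) (univ ×ˢ Icc 0 1) := by
  have hKne : ∀ t : ℝ, ((fun s => g s t) '' Icc 0 1).Nonempty :=
    fun t => ⟨g 0 t, mem_image_of_mem _ (by norm_num)⟩
  have hgt : ∀ t ∈ Icc (0:ℝ) 1, ContinuousOn (fun s => g s t) (Icc 0 1) := by
    intro t ht
    exact hg.comp (Continuous.continuousOn (continuous_id.prodMk continuous_const)) (fun s hs => ⟨hs, ht⟩)
  have hKcomp : ∀ t ∈ Icc (0:ℝ) 1, IsCompact ((fun s => g s t) '' Icc 0 1) :=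
    fun t ht => isCompact_Icc.image_of_continuousOn (hgt t ht)
  -- |dpm| equals the distance to the curve
  have habs : ∀ x : ℂ, ∀ t ∈ Icc (0:ℝ) 1,
      |dpm x t| = infDist x ((fun s => g s t) '' Icc 0 1) := by
    intro x t ht
    by_cases hc : x ∈ (fun s => g s t) '' Icc 0 1 ∨ WindingNumber (fun s => g s t) x 0
    · rw [h1 x t ht hc, _root_.abs_of_nonneg infDist_nonneg]
    · push_neg at hc
      rw [h2 x t ht hc.1 hc.2, abs_neg, _root_.abs_of_nonneg infDist_nonneg]
  -- uniform continuity in t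
  have huc : ∀ ε > (0:ℝ), ∃ δ > (0:ℝ), ∀ t ∈ Icc (0:ℝ) 1, ∀ u ∈ Icc (0:ℝ) 1,
      dist t u < δ → ∀ s ∈ Icc (0:ℝ) 1, dist (g s t) (g s u) < ε := by
    intro ε hε
    have := (isCompact_Icc.prod isCompact_Icc).uniformContinuousOn_of_continuous hg
    rw [Metric.uniformContinuousOn_iff] at this
    obtain ⟨δ, hδ, hd⟩ := this ε hε
    refine ⟨δ, hδ, fun t ht u hu htu s hs => ?_⟩
    refine hd (s, t) ⟨hs, ht⟩ (s, u) ⟨hs, hu⟩ ?_ 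
    rw [Prod.dist_eq]
    exact max_lt (by rw [dist_self]; exact hδ) htu
  -- joint continuity of the unsigned distance
  have hF : ContinuousOn (fun q : ℂ × ℝ => infDist q.1 ((fun s => g s q.2) '' Icc 0 1))
      (univ ×ˢ Icc 0 1) := by
    rw [Metric.continuousOn_iff]
    rintro ⟨x₀, t₀⟩ hq₀ ε hε
    simp only [mem_prod, mem_univ, true_and] at hq₀
    obtain ⟨δ, hδ, hd⟩ := huc (ε/2) (by linarith)
    refine ⟨min δ (ε/2), by positivity, ?_⟩
    rintro ⟨x, t⟩ hq hdist
    simp only [mem_prod, mem_univ, true_and] at hq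
    rw [Prod.dist_eq, max_lt_iff] at hdist
    have hdx : dist x x₀ < ε/2 := lt_of_lt_of_le hdist.1 (min_le_right _ _)
    have hdt : ∀ s ∈ Icc (0:ℝ) 1, dist (g s t) (g s t₀) < ε/2 :=
      hd t hq t₀ hq₀ (lt_of_lt_of_le hdist.2 (min_le_left _ _))
    -- one-sided bound
    have key : ∀ u ∈ Icc (0:ℝ) 1, ∀ v ∈ Icc (0:ℝ) 1, ∀ y z : ℂ,
        dist y z < ε/2 → (∀ s ∈ Icc (0:ℝ) 1, dist (g s u) (g s v) < ε/2) →
        infDist y ((fun s => g s u) '' Icc 0 1) <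
          infDist z ((fun s => g s v) '' Icc 0 1) + ε := by
      intro u hu v hv y z hyz hguv
      obtain ⟨w, hw, hweq⟩ := (hKcomp v hv).exists_infDist_eq_dist (hKne v) z
      obtain ⟨s, hs, rfl⟩ := hw
      calc infDist y ((fun s => g s u) '' Icc 0 1) ≤ dist y (g s u) :=
            infDist_le_dist_of_mem (mem_image_of_mem _ hs)
        _ ≤ dist y z + dist z (g s v) + dist (g s v) (g s u) := by
            have := dist_triangle4 y z (g s v) (g s u)
            linarith
        _ < infDist z ((fun s => g s v) '' Icc 0 1) + ε := by
            have h5 := hguv s hs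
            rw [dist_comm (g s u) (g s v)] at h5
            simp only at hweq ⊢
            linarith [hweq, h5, hyz]
    have h12 := key t hq t₀ hq₀ x x₀ hdx hdt
    have h21 := key t₀ hq₀ t hq x₀ x (by rwa [dist_comm]) (fun s hs => by
      rw [dist_comm]; exact hdt s hs)
    rw [Real.dist_eq, abs_lt]
    constructor <;> linarith
  -- main proof
  rintro ⟨x₀, t₀⟩ hq₀
  have hq₀' := hq₀
  simp only [mem_prod, mem_univ, true_and] at hq₀'
  by_cases h0 : x₀ ∈ (fun s => g s t₀) '' Icc 0 1
  · -- on the curve: |dpm| → 0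
    have hd0 : dpm x₀ t₀ = 0 := by
      rw [h1 x₀ t₀ hq₀' (Or.inl h0), infDist_zero_of_mem h0]
    have hFt : Tendsto (fun q : ℂ × ℝ => infDist q.1 ((fun s => g s q.2) '' Icc 0 1))
        (nhdsWithin (x₀, t₀) (univ ×ˢ Icc 0 1)) (nhds 0) := by
      have := hF (x₀, t₀) hq₀
      rwa [Metric.continuousWithinAt_iff, ← Metric.tendsto_nhdsWithin_nhds,
        infDist_zero_of_mem h0] at this
      -- fallback
    unfold ContinuousWithinAt
    rw [show (fun q : ℂ × ℝ => dpm q.1 q.2) (x₀, t₀) = 0 by simpa using hd0]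
    rw [tendsto_zero_iff_abs_tendsto_zero]
    refine hFt.congr' ?_
    filter_upwards [self_mem_nhdsWithin] with q hq
    simp only [mem_prod, mem_univ, true_and] at hq
    exact (habs q.1 q.2 hq).symm
  · -- off the curve: sign is locally constant
    set F₀ := infDist x₀ ((fun s => g s t₀) '' Icc 0 1) with hF₀def
    have hF₀ : 0 < F₀ :=
      ((hKcomp t₀ hq₀').isClosed.notMem_iff_infDist_pos (hKne t₀)).mp h0
    obtain ⟨δ, hδ, hd⟩ := huc (F₀/4) (by linarith)
    set U : Set (ℂ × ℝ) := Metric.ball x₀ (F₀/4) ×ˢ Metric.ball t₀ δ with hUdef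
    have hUopen : IsOpen U := (Metric.isOpen_ball).prod Metric.isOpen_ball
    have hUmem : (x₀, t₀) ∈ U := ⟨Metric.mem_ball_self (by linarith), Metric.mem_ball_self hδ⟩
    -- the key perturbation bounds
    have hbase : ∀ s ∈ Icc (0:ℝ) 1, F₀ ≤ ‖g s t₀ - x₀‖ := by
      intro s hs
      have := infDist_le_dist_of_mem (mem_image_of_mem (fun s => g s t₀) hs) (x := x₀)
      rwa [dist_eq_norm, norm_sub_rev] at this
    have hpert : ∀ x : ℂ, ∀ t : ℝ, (x, t) ∈ U → t ∈ Icc (0:ℝ) 1 →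
        ∀ s ∈ Icc (0:ℝ) 1, ‖(g s t - x) - (g s t₀ - x₀)‖ < F₀/2 := by
      rintro x t ⟨hxU, htU⟩ ht s hs
      have h1' : ‖g s t - g s t₀‖ < F₀/4 := by
        have := hd t ht t₀ hq₀' (by simpa [Real.dist_eq] using htU) s hs
        rwa [dist_eq_norm] at this
      have h2' : ‖x₀ - x‖ < F₀/4 := by
        have := hxU
        rw [Metric.mem_ball, dist_eq_norm, norm_sub_rev] at this
        exact this
      calc ‖(g s t - x) - (g s t₀ - x₀)‖ = ‖(g s t - g s t₀) + (x₀ - x)‖ := by ring_nf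
        _ ≤ ‖g s t - g s t₀‖ + ‖x₀ - x‖ := norm_add_le _ _
        _ < F₀/2 := by linarith
    have hW_iff : ∀ x : ℂ, ∀ t : ℝ, (x, t) ∈ U → t ∈ Icc (0:ℝ) 1 →
        (WindingNumber (fun s => g s t) x 0 ↔ WindingNumber (fun s => g s t₀) x₀ 0) := by
      intro x t hU ht
      have hcx : ContinuousOn (fun s => g s t - x) (Icc 0 1) :=
        (hgt t ht).sub continuousOn_const
      have hcx₀ : ContinuousOn (fun s => g s t₀ - x₀) (Icc 0 1) :=
        (hgt t₀ hq₀').sub continuousOn_const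
      have hnormnew : ∀ s ∈ Icc (0:ℝ) 1, F₀/2 < ‖g s t - x‖ := by
        intro s hs
        have hp := hpert x t hU ht s hs
        have hb := hbase s hs
        have hkey : ‖g s t₀ - x₀‖ - ‖g s t - x‖ ≤ ‖(g s t - x) - (g s t₀ - x₀)‖ := by
          have h4 := norm_sub_norm_le ((g s t₀ - x₀)) ((g s t - x))
          rwa [norm_sub_rev (g s t₀ - x₀) (g s t - x)] at h4
        linarith
      constructor
      · intro hw
        refine wind_transfer (fun s => g s t) (fun s => g s t₀) x x₀ 0 hcx₀
          (hloop t ht) (hloop t₀ hq₀') ?_ hw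
        intro s hs
        have hp := hpert x t hU ht s hs
        have := hnormnew s hs
        calc ‖(g s t₀ - x₀) - (g s t - x)‖ = ‖(g s t - x) - (g s t₀ - x₀)‖ := norm_sub_rev _ _
          _ < F₀/2 := hp
          _ < ‖g s t - x‖ := this
      · intro hw
        refine wind_transfer (fun s => g s t₀) (fun s => g s t) x₀ x 0 hcx
          (hloop t₀ hq₀') (hloop t ht) ?_ hw
        intro s hs
        have hp := hpert x t hU ht s hs
        have hb := hbase s hs
        calc ‖(g s t - x) - (g s t₀ - x₀)‖ < F₀/2 := hp
          _ < ‖g s t₀ - x₀‖ := by linarith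
    have hnotmem : ∀ x : ℂ, ∀ t : ℝ, (x, t) ∈ U → t ∈ Icc (0:ℝ) 1 →
        x ∉ (fun s => g s t) '' Icc 0 1 := by
      rintro x t hU ht ⟨s, hs, hgs⟩
      have hp := hpert x t hU ht s hs
      have hb := hbase s hs
      simp only at hgs
      rw [hgs] at hp
      simp only [sub_self, zero_sub, norm_neg] at hp
      linarith
    by_cases hw₀ : WindingNumber (fun s => g s t₀) x₀ 0
    · -- dpm = F near the point
      refine (hF (x₀, t₀) hq₀).congr_of_eventuallyEq ?_ ?_
      · filter_upwards [inter_mem_nhdsWithin _ (hUopen.mem_nhds hUmem)] with q hq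
        obtain ⟨hqS, hqU⟩ := hq
        simp only [mem_prod, mem_univ, true_and] at hqS
        exact h1 q.1 q.2 hqS (Or.inr ((hW_iff q.1 q.2 hqU hqS).mpr hw₀))
      · exact h1 x₀ t₀ hq₀' (Or.inr hw₀)
    · -- dpm = -F near the point
      refine ((hF (x₀, t₀) hq₀).neg).congr_of_eventuallyEq ?_ ?_
      · filter_upwards [inter_mem_nhdsWithin _ (hUopen.mem_nhds hUmem)] with q hq
        obtain ⟨hqS, hqU⟩ := hq
        simp only [mem_prod, mem_univ, true_and] at hqS
        exact h2 q.1 q.2 hqS (hnotmem q.1 q.2 hqU hqS)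
          (fun h => hw₀ ((hW_iff q.1 q.2 hqU hqS).mp h))
      · exact h2 x₀ t₀ hq₀' h0 hw₀
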